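/- Under the genericness assumption, every optimal W-graph g*_k is a subgraph (as an undirected graph) of the unique minimum spanning tree T* of the network with edge costs c_{ij} = V_{ij}. -/

import Mathlib

open Finset

section Aux

variable {V : Type*}

lemma exists_cross_edge {T : SimpleGraph V} {A : Set V} {i j : V} (w : T.Walk i j) :
    w.IsTrail → i ∈ A → j ∉ A →
    ∃ u v, u ∈ A ∧ v ∉ A ∧ T.Adj u v ∧ s(u, v) ∈ w.edges ∧
      (T.deleteEdges {s(u, v)}).Reachable i u ∧ (T.deleteEdges {s(u, v)}).Reachable v j := by
  induction w with
  | nil => intro _ hi hj; exact absurd hi hj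
  | @cons a b c h w' ih =>
    intro ht hi hj
    rw [SimpleGraph.Walk.isTrail_cons] at ht
    by_cases hb : b ∈ A
    · obtain ⟨u, v, hu, hv, huv, hmem, r1, r2⟩ := ih ht.1 hb hj
      have hne : s(a, b) ≠ s(u, v) := by
        intro hEq; rw [hEq] at ht; exact ht.2 hmem
      have hstep : (T.deleteEdges {s(u, v)}).Adj a b := by
        rw [SimpleGraph.deleteEdges_adj]
        exact ⟨h, by simpa using hne⟩
      exact ⟨u, v, hu, hv, huv, by simp [hmem],
        hstep.reachable.trans r1, r2⟩
    · refine ⟨a, b, hi, hb, h, by simp, SimpleGraph.Reachable.refl _, ?_⟩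
      refine ⟨w'.toDeleteEdges {s(a, b)} ?_⟩
      intro e' he'
      rw [Set.mem_singleton_iff]
      rintro rfl
      exact ht.2 he'

open scoped Classical in
/-- Re-route the arrow function `nx` along the iterate path `u, nx u, …, nx^[N] u`, reversing
all arrows on it and sending `u` to `v` instead. -/
noncomputable def reroute (nx : V → V) (u v : V) (N : ℕ) (x : V) : V :=
  if hx : ∃ t, t ≤ N ∧ nx^[t] u = x then
    (if Nat.find hx = 0 then v else nx^[Nat.find hx - 1] u)
  else nx x

lemma reroute_eq_of_forall_ne {nx : V → V} {u v : V} {N : ℕ} {x : V}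
    (hx : ∀ t, t ≤ N → nx^[t] u ≠ x) : reroute nx u v N x = nx x := by
  rw [reroute, dif_neg]
  rintro ⟨t, ht, h⟩
  exact hx t ht h

open scoped Classical in
lemma reroute_eval {nx : V → V} {u v : V} {N : ℕ}
    (hinj : ∀ a, a ≤ N → ∀ b, b ≤ N → nx^[a] u = nx^[b] u → a = b)
    {t : ℕ} (ht : t ≤ N) :
    reroute nx u v N (nx^[t] u) = if t = 0 then v else nx^[t - 1] u := by
  rw [reroute, dif_pos ⟨t, ht, rfl⟩]
  have hs := Nat.find_spec (⟨t, ht, rfl⟩ : ∃ s, s ≤ N ∧ nx^[s] u = nx^[t] u)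
  rw [hinj _ hs.1 _ ht hs.2]

end Aux

/-- A `W`-graph on the network `G` with sink set `W`: every non-sink state `i` has exactly
one outgoing arrow `i → next i` along an edge of `G`, sinks are encoded as fixed points of
`next`, and from every state some iterate of `next` reaches a sink (no cycles). -/
structure WGraph {V : Type*} (G : SimpleGraph V) (W : Finset V) where
  next : V → V
  adj_of_not_sink : ∀ i ∉ W, G.Adj i (next i)
  sink_fixed : ∀ i ∈ W, next i = i
  absorbed : ∀ i : V, ∃ n : ℕ, next^[n] i ∈ W

/-- The cost `∑_{(i → j)} (V_{ij} - V_i)` of a `W`-graph, the sum running over its arrows. -/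
def wcost {V : Type*} [Fintype V] [DecidableEq V] {G : SimpleGraph V} {W : Finset V}
    (Ve : Sym2 V → ℝ) (Vp : V → ℝ) (g : WGraph G W) : ℝ :=
  ∑ i ∈ Wᶜ, (Ve s(i, g.next i) - Vp i)

/-- The (undirected) edge set of the forest underlying a `W`-graph. -/
def wEdges {V : Type*} [Fintype V] [DecidableEq V] {G : SimpleGraph V} {W : Finset V}
    (g : WGraph G W) : Finset (Sym2 V) :=
  Wᶜ.image fun i => s(i, g.next i)

/-- An optimal `W`-graph with `k` sinks: one minimizing the cost among all `W`-graphs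
on `G` with `k` sinks. -/
def IsOptimalWGraph {V : Type*} [Fintype V] [DecidableEq V] (G : SimpleGraph V)
    (Ve : Sym2 V → ℝ) (Vp : V → ℝ) (k : ℕ) (W : Finset V) (g : WGraph G W) : Prop :=
  W.card = k ∧
    ∀ (W' : Finset V) (g' : WGraph G W'), W'.card = k →
      wcost Ve Vp g ≤ wcost Ve Vp g'

/-- Assumption 1 (genericness): all vertex potentials are distinct, all edge potentials
(on edges of `G`) are distinct, and all differences `V_{ij} - V_k` are distinct. -/
def Generic {V : Type*} (G : SimpleGraph V) (Ve : Sym2 V → ℝ) (Vp : V → ℝ) : Prop :=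
  Function.Injective Vp ∧
  (∀ e ∈ G.edgeSet, ∀ f ∈ G.edgeSet, Ve e = Ve f → e = f) ∧
  (∀ e ∈ G.edgeSet, ∀ f ∈ G.edgeSet, ∀ i j : V,
      Ve e - Vp i = Ve f - Vp j → e = f ∧ i = j)

/-- A minimum spanning tree of a weighted graph. -/
def IsMST {V : Type*} (G : SimpleGraph V) (c : Sym2 V → ℝ) (T : SimpleGraph V) : Prop :=
  T.IsTree ∧ T ≤ G ∧
    ∀ T' : SimpleGraph V, T'.IsTree → T' ≤ G →
      (∑ᶠ e ∈ T.edgeSet, c e) ≤ ∑ᶠ e ∈ T'.edgeSet, c e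

/-- under the genericness assumption, every optimal `W`-graph is, as an
undirected graph, a subgraph of the unique minimum spanning tree `T` of the network with
edge costs `c_{ij} = V_{ij}`. -/
theorem optimal_wgraph_subgraph_of_mst {V : Type*} [Fintype V] [DecidableEq V]
    (G : SimpleGraph V) (hG : G.Connected) (Ve : Sym2 V → ℝ) (Vp : V → ℝ)
    (hgen : Generic G Ve Vp)
    (T : SimpleGraph V) (hT : IsMST G Ve T)
    (k : ℕ) (W : Finset V) (g : WGraph G W)
    (hopt : IsOptimalWGraph G Ve Vp k W g) :
    ∀ i ∉ W, T.Adj i (g.next i) := by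
  classical
  intro i hiW
  by_contra hTne
  obtain ⟨hTtree, hTG, hTmin⟩ := hT
  have hij : G.Adj i (g.next i) := g.adj_of_not_sink i hiW
  have hijne : i ≠ g.next i := hij.ne
  -- the "basin" of i
  set A : Set V := {x | ∃ n, g.next^[n] x = i} with hA
  have hiA : i ∈ A := ⟨0, rfl⟩
  have hfix : ∀ x ∈ W, ∀ s : ℕ, g.next^[s] x = x :=
    fun x hx s => Function.iterate_fixed (g.sink_fixed x hx) s
  have hAW : ∀ x ∈ A, x ∉ W := by
    rintro x ⟨n, hn⟩ hxW
    rw [hfix x hxW n] at hn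
    exact hiW (hn ▸ hxW)
  have hAcl : ∀ x, g.next x ∈ A → x ∈ A := by
    rintro x ⟨n, hn⟩
    exact ⟨n + 1, by rwa [Function.iterate_succ_apply]⟩
  have hjA : g.next i ∉ A := by
    rintro ⟨n, hn⟩
    have hper : g.next^[n + 1] i = i := by rw [Function.iterate_succ_apply]; exact hn
    obtain ⟨m, hm⟩ := g.absorbed i
    have hk : ∀ k : ℕ, g.next^[k * (n + 1)] i = i := by
      intro k
      induction k with
      | zero => simp
      | succ k ih => rw [Nat.succ_mul, Function.iterate_add_apply, hper]; exact ih
    have hle : m ≤ m * (n + 1) := Nat.le_mul_of_pos_right m (Nat.succ_pos n)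
    obtain ⟨s, hs⟩ := Nat.le.dest hle
    have hWmem : g.next^[m * (n + 1)] i ∈ W := by
      rw [← hs, Nat.add_comm, Function.iterate_add_apply, hfix _ hm s]
      exact hm
    rw [hk m] at hWmem
    exact hiW hWmem
  -- crossing edge
  obtain ⟨w0⟩ : T.Reachable i (g.next i) := hTtree.isConnected.preconnected i (g.next i)
  obtain ⟨u, v, hu, hv, huv, -, r1, r2⟩ :=
    exists_cross_edge (A := A) w0.bypass w0.bypass_isPath.isTrail hiA hjA
  -- `Ve s(u,v) < Ve s(i, g.next i)` via the exchanged spanning tree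
  have hsep : ¬ (T.deleteEdges {s(u, v)}).Reachable i (g.next i) := by
    intro h
    have hb := (SimpleGraph.isAcyclic_iff_forall_adj_isBridge.mp hTtree.IsAcyclic) huv
    rw [SimpleGraph.isBridge_iff] at hb
    exact hb (r1.symm.trans (h.trans r2.symm))
  have hlt : Ve s(u, v) < Ve s(i, g.next i) := by
    set D := T.deleteEdges {s(u, v)} with hD
    set T' := D ⊔ SimpleGraph.fromEdgeSet {s(i, g.next i)} with hT'
    have hDle : D ≤ T := SimpleGraph.deleteEdges_le _
    have hT'adj : T'.Adj i (g.next i) := by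
      rw [hT', SimpleGraph.sup_adj, SimpleGraph.fromEdgeSet_adj]
      exact Or.inr ⟨rfl, hijne⟩
    have hT'G : T' ≤ G := by
      rw [hT']
      refine sup_le (hDle.trans hTG) ?_
      intro x y hxy
      rw [SimpleGraph.fromEdgeSet_adj, Set.mem_singleton_iff] at hxy
      rcases Sym2.eq_iff.mp hxy.1 with ⟨rfl, rfl⟩ | ⟨rfl, rfl⟩
      · exact hij
      · exact hij.symm
    have hDT' : D ≤ T' := le_sup_left
    have hT'conn : T'.Connected := by
      have hreach : ∀ x y : V, T.Reachable x y → T'.Reachable x y := by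
        intro x y hxy
        obtain ⟨w⟩ := hxy
        induction w with
        | nil => exact SimpleGraph.Reachable.refl _
        | @cons a b c hadj w' ih =>
          have hab : T'.Reachable a b := by
            by_cases hfe : s(a, b) = s(u, v)
            · have huvT' : T'.Reachable u v :=
                (r1.mono hDT').symm.trans (hT'adj.reachable.trans (r2.mono hDT').symm)
              rcases Sym2.eq_iff.mp hfe with ⟨rfl, rfl⟩ | ⟨rfl, rfl⟩
              · exact huvT'
              · exact huvT'.symm
            · refine SimpleGraph.Adj.reachable ?_
              rw [hT', SimpleGraph.sup_adj]
              left
              rw [hD, SimpleGraph.deleteEdges_adj]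
              exact ⟨hadj, by simpa using hfe⟩
          exact hab.trans ih
      have : Nonempty V := hG.nonempty
      exact SimpleGraph.Connected.mk (fun x y => hreach x y (hTtree.isConnected.preconnected x y))
    have hT'ac : T'.IsAcyclic := by
      intro x c hc
      by_cases hce : s(i, g.next i) ∈ c.edges
      · have hiff := (SimpleGraph.adj_and_reachable_delete_edges_iff_exists_cycle
          (G := T') (v := i) (w := g.next i)).mpr ⟨x, c, hc, hce⟩
        have hle : T' \ SimpleGraph.fromEdgeSet {s(i, g.next i)} ≤ D := by
          intro a b hab
          rw [SimpleGraph.sdiff_adj] at hab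
          rcases (by rw [hT', SimpleGraph.sup_adj] at hab; exact hab.1.imp id id :
              D.Adj a b ∨ (SimpleGraph.fromEdgeSet {s(i, g.next i)}).Adj a b) with h1 | h1
          · exact h1
          · exact absurd h1 hab.2
        exact hsep ((hiff.2).mono hle)
      · have hed : ∀ e' ∈ c.edges, e' ∈ T.edgeSet := by
          intro e' he'
          have hmem : e' ∈ T'.edgeSet := c.edges_subset_edgeSet he'
          rw [hT', SimpleGraph.edgeSet_sup] at hmem
          rcases hmem with h1 | h1
          · exact SimpleGraph.edgeSet_mono hDle h1
          · rw [SimpleGraph.edgeSet_fromEdgeSet, Set.mem_diff, Set.mem_singleton_iff] at h1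
            exact absurd (h1.1 ▸ he') hce
        exact hTtree.IsAcyclic (c.transfer T hed) (hc.transfer hed)
    have hT'tree : T'.IsTree := ⟨hT'conn, hT'ac⟩
    -- edge sets
    have hfT : s(u, v) ∈ T.edgeSet := huv
    have heT : s(i, g.next i) ∉ T.edgeSet := hTne
    have hfene : s(u, v) ≠ s(i, g.next i) := fun h => heT (h ▸ hfT)
    have hTfin : T.edgeSet.Finite := Set.toFinite _
    have hT'fin : T'.edgeSet.Finite := Set.toFinite _
    have hediag : ¬ (s(i, g.next i) : Sym2 V).IsDiag := by
      rw [Sym2.mk_isDiag_iff]; exact hijne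
    have hedges : hT'fin.toFinset = insert (s(i, g.next i)) (hTfin.toFinset.erase s(u, v)) := by
      ext e'
      simp only [Set.Finite.mem_toFinset, hT', hD, SimpleGraph.edgeSet_sup,
        SimpleGraph.edgeSet_deleteEdges, SimpleGraph.edgeSet_fromEdgeSet, Set.mem_union,
        Set.mem_diff, Set.mem_singleton_iff, Finset.mem_insert, Finset.mem_erase,
        Set.mem_setOf_eq]
      constructor
      · rintro (⟨h1, h2⟩ | ⟨h1, h2⟩)
        · exact Or.inr ⟨h2, h1⟩
        · exact Or.inl h1
      · rintro (rfl | ⟨h1, h2⟩)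
        · exact Or.inr ⟨rfl, hediag⟩
        · exact Or.inl ⟨h2, h1⟩
    have hsum : (∑ᶠ e' ∈ T'.edgeSet, Ve e')
        = Ve s(i, g.next i) + ((∑ᶠ e' ∈ T.edgeSet, Ve e') - Ve s(u, v)) := by
      rw [← Set.Finite.coe_toFinset hT'fin, finsum_mem_coe_finset,
        ← Set.Finite.coe_toFinset hTfin, finsum_mem_coe_finset, hedges,
        Finset.sum_insert (by
          simp only [Finset.mem_erase, Set.Finite.mem_toFinset]
          rintro ⟨-, h2⟩
          exact heT h2),
        Finset.sum_erase_eq_sub (Set.Finite.mem_toFinset hTfin |>.mpr hfT)]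
    have hmst := hTmin T' hT'tree hT'G
    rw [hsum] at hmst
    have hfG : s(u, v) ∈ G.edgeSet := hTG huv
    have hVene : Ve s(u, v) ≠ Ve s(i, g.next i) :=
      fun hh => hfene (hgen.2.1 _ hfG _ hij hh)
    have : Ve s(u, v) ≤ Ve s(i, g.next i) := by linarith
    exact lt_of_le_of_ne this hVene
  -- the rerouted W-graph is cheaper: contradiction
  have hNex : ∃ n, g.next^[n] u = i := hu
  have hpN : g.next^[Nat.find hNex] u = i := Nat.find_spec hNex
  set N := Nat.find hNex with hN
  have hmin : ∀ t, t < N → g.next^[t] u ≠ i := fun t ht => Nat.find_min hNex ht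
  have hpinj : ∀ a, a ≤ N → ∀ b, b ≤ N → g.next^[a] u = g.next^[b] u → a = b := by
    have key : ∀ a b, a < b → b ≤ N → g.next^[a] u ≠ g.next^[b] u := by
      intro a b hab hbN hEq
      apply hmin (N - b + a) (by omega)
      calc g.next^[N - b + a] u = g.next^[N - b] (g.next^[a] u) :=
            Function.iterate_add_apply _ _ _ _
        _ = g.next^[N - b] (g.next^[b] u) := by rw [hEq]
        _ = g.next^[N - b + b] u := (Function.iterate_add_apply _ _ _ _).symm
        _ = i := by rw [Nat.sub_add_cancel hbN]; exact hpN
    intro a ha b hb hEq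
    rcases lt_trichotomy a b with h | h | h
    · exact absurd hEq (key a b h hb)
    · exact h
    · exact absurd hEq.symm (key b a h ha)
  have hpA : ∀ t, t ≤ N → g.next^[t] u ∈ A := fun t ht =>
    ⟨N - t, by rw [← Function.iterate_add_apply, Nat.sub_add_cancel ht]; exact hpN⟩
  have hnxt_p : ∀ t, t ≤ N →
      reroute g.next u v N (g.next^[t] u) = if t = 0 then v else g.next^[t - 1] u :=
    fun t ht => reroute_eval hpinj ht
  have hnxt_of : ∀ x, (∀ t, t ≤ N → g.next^[t] u ≠ x) →
      reroute g.next u v N x = g.next x := fun x hx => reroute_eq_of_forall_ne hx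
  have hnxt_ofA : ∀ x, x ∉ A → reroute g.next u v N x = g.next x :=
    fun x hx => hnxt_of x (fun t ht hEq => hx (hEq ▸ hpA t ht))
  have hagree : ∀ (s : ℕ) (x : V), x ∉ A → (reroute g.next u v N)^[s] x = g.next^[s] x := by
    intro s
    induction s with
    | zero => intro x _; rfl
    | succ s ih =>
      intro x hx
      rw [Function.iterate_succ_apply, Function.iterate_succ_apply, hnxt_ofA x hx]
      exact ih _ (fun hA => hx (hAcl x hA))
  have hup : ∀ t, t ≤ N → (reroute g.next u v N)^[t] (g.next^[t] u) = u := by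
    intro t
    induction t with
    | zero => intro _; rfl
    | succ t ih =>
      intro ht
      rw [Function.iterate_succ_apply, hnxt_p (t + 1) ht, if_neg (Nat.succ_ne_zero t),
        Nat.add_sub_cancel]
      exact ih (Nat.le_of_succ_le ht)
  have hnxtu : reroute g.next u v N u = v := by
    have h0 := hnxt_p 0 (Nat.zero_le N)
    simpa using h0
  have habs_A : ∀ x, x ∈ A → ∃ m, (reroute g.next u v N)^[m] x ∈ W := by
    intro x hxA
    have hexm : ∃ m, ∃ t, t ≤ N ∧ g.next^[t] u = g.next^[m] x := by
      obtain ⟨n, hn⟩ := hxA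
      exact ⟨n, N, le_rfl, by rw [hpN, hn]⟩
    have hspec := Nat.find_spec hexm
    set M := Nat.find hexm with hM
    obtain ⟨t, htN, hpt⟩ := hspec
    have hagreeM : ∀ s, s ≤ M → (reroute g.next u v N)^[s] x = g.next^[s] x := by
      intro s
      induction s with
      | zero => intro _; rfl
      | succ s ih =>
        intro hs
        rw [Function.iterate_succ_apply', Function.iterate_succ_apply',
          ih (Nat.le_of_succ_le hs)]
        exact hnxt_of _ (fun t' ht' hEq => Nat.find_min hexm (show s < M from hs) ⟨t', ht', hEq⟩)
    have h1 : (reroute g.next u v N)^[M] x = g.next^[t] u := by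
      rw [hagreeM M le_rfl]; exact hpt.symm
    have h2 : (reroute g.next u v N)^[t + M] x = u := by
      rw [Function.iterate_add_apply, h1, hup t htN]
    have h3 : (reroute g.next u v N)^[1 + (t + M)] x = v := by
      rw [Function.iterate_add_apply, h2, Function.iterate_one, hnxtu]
    obtain ⟨m, hm⟩ := g.absorbed v
    refine ⟨m + (1 + (t + M)), ?_⟩
    rw [Function.iterate_add_apply, h3, hagree m v hv]
    exact hm
  have habs : ∀ x : V, ∃ m, (reroute g.next u v N)^[m] x ∈ W := by
    intro x
    by_cases hxA : x ∈ A
    · exact habs_A x hxA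
    · obtain ⟨m, hm⟩ := g.absorbed x
      exact ⟨m, by rw [hagree m x hxA]; exact hm⟩
  have hadj : ∀ x ∉ W, G.Adj x (reroute g.next u v N x) := by
    intro x hxW
    by_cases hx : ∃ t, t ≤ N ∧ g.next^[t] u = x
    · obtain ⟨t, ht, rfl⟩ := hx
      rw [hnxt_p t ht]
      rcases Nat.eq_zero_or_pos t with rfl | htpos
      · simpa using hTG huv
      · rw [if_neg (Nat.pos_iff_ne_zero.mp htpos)]
        have ht1 : t - 1 + 1 = t := Nat.succ_pred_eq_of_pos htpos
        have h4 : g.next (g.next^[t - 1] u) = g.next^[t] u := by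
          conv_rhs => rw [← ht1]
          exact (Function.iterate_succ_apply' _ _ _).symm
        have h5 : g.next^[t - 1] u ∉ W := hAW _ (hpA (t - 1) (le_trans (Nat.sub_le t 1) ht))
        have h6 := g.adj_of_not_sink _ h5
        rw [h4] at h6
        exact h6.symm
    · push_neg at hx
      rw [hnxt_of x hx]
      exact g.adj_of_not_sink x hxW
  have hsink : ∀ x ∈ W, reroute g.next u v N x = x := by
    intro x hxW
    rw [hnxt_ofA x (fun hA => hAW x hA hxW)]
    exact g.sink_fixed x hxW
  set g' : WGraph G W := ⟨reroute g.next u v N, hadj, hsink, habs⟩ with hg'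
  -- cost difference
  set S : Finset V := (Finset.range (N + 1)).image (fun t => g.next^[t] u) with hS
  have hS_sub : S ⊆ Wᶜ := by
    intro x hx
    rw [hS, Finset.mem_image] at hx
    obtain ⟨t, htr, rfl⟩ := hx
    rw [Finset.mem_compl]
    exact hAW _ (hpA t (Nat.lt_succ_iff.mp (Finset.mem_range.mp htr)))
  have hdiff : wcost Ve Vp g' - wcost Ve Vp g = Ve s(u, v) - Ve s(i, g.next i) := by
    have h1 : wcost Ve Vp g' - wcost Ve Vp g
        = ∑ x ∈ Wᶜ, (Ve s(x, reroute g.next u v N x) - Ve s(x, g.next x)) := by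
      rw [wcost, wcost, ← Finset.sum_sub_distrib]
      exact Finset.sum_congr rfl (fun x _ => by ring)
    have hzero : ∀ x ∈ Wᶜ, x ∉ S →
        Ve s(x, reroute g.next u v N x) - Ve s(x, g.next x) = 0 := by
      intro x _ hxS
      have hxx : reroute g.next u v N x = g.next x := by
        refine hnxt_of x (fun t ht hEq => hxS ?_)
        rw [hS, Finset.mem_image]
        exact ⟨t, Finset.mem_range.mpr (Nat.lt_succ_of_le ht), hEq⟩
      rw [hxx, sub_self]
    rw [h1, ← Finset.sum_subset hS_sub hzero, hS,
      Finset.sum_image (fun a ha b hb hEq =>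
        hpinj a (Nat.lt_succ_iff.mp (Finset.mem_range.mp ha))
          b (Nat.lt_succ_iff.mp (Finset.mem_range.mp hb)) hEq),
      Finset.sum_sub_distrib]
    have hA' : ∑ t ∈ Finset.range (N + 1), Ve s(g.next^[t] u, reroute g.next u v N (g.next^[t] u))
        = (∑ t ∈ Finset.range N, Ve s(g.next^[t + 1] u, g.next^[t] u)) + Ve s(u, v) := by
      rw [Finset.sum_range_succ']
      congr 1
      · refine Finset.sum_congr rfl (fun t htr => ?_)
        rw [hnxt_p (t + 1) (Finset.mem_range.mp htr), if_neg (Nat.succ_ne_zero t),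
          Nat.add_sub_cancel]
      · rw [show (g.next^[0] u) = u from rfl, hnxtu]
    have hB' : ∑ t ∈ Finset.range (N + 1), Ve s(g.next^[t] u, g.next (g.next^[t] u))
        = (∑ t ∈ Finset.range N, Ve s(g.next^[t] u, g.next^[t + 1] u)) + Ve s(i, g.next i) := by
      rw [Finset.sum_range_succ]
      congr 1
      · refine Finset.sum_congr rfl (fun t _ => ?_)
        rw [← Function.iterate_succ_apply' g.next t u]
      · rw [hpN]
    rw [hA', hB',
      show ∑ t ∈ Finset.range N, Ve s(g.next^[t + 1] u, g.next^[t] u)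
          = ∑ t ∈ Finset.range N, Ve s(g.next^[t] u, g.next^[t + 1] u) from
        Finset.sum_congr rfl (fun t _ => by rw [Sym2.eq_swap])]
    ring
  have hopt2 := hopt.2 W g' hopt.1
  linarith
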